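/- If G is a minimum-order counterexample to the statement 'every graph with n vertices and at most 2n−3 edges has a stable cutset or belongs to G_sc', then any two non-adjacent vertices of G have at most 2 common neighbors. -/

import Mathlib

open SimpleGraph

/-- `S` is a stable cutset of `G`: an independent set whose removal disconnects `G`. -/
def SimpleGraph.IsStableCutset {V : Type*} (G : SimpleGraph V) (S : Set V) : Prop :=
  (∀ a ∈ S, ∀ b ∈ S, ¬ G.Adj a b) ∧ ¬ (G.induce Sᶜ).Preconnected

def SimpleGraph.HasStableCutset {V : Type*} (G : SimpleGraph V) : Prop :=
  ∃ S : Set V, G.IsStableCutset S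

/-- The cycle on six vertices. -/
def CycleSix : SimpleGraph (Fin 6) := SimpleGraph.fromRel (fun i j => j = i + 1)

/-- The complement of `C₆`, i.e. the triangular prism. -/
def PrismGraph : SimpleGraph (Fin 6) := CycleSixᶜ

/-- Graphs on (subsets of) a fixed ambient vertex type `α`, with graph-wise
union and intersection given by the lattice structure. -/
abbrev AmbGraph (α : Type*) := SimpleGraph.Subgraph (⊤ : SimpleGraph α)

def IsK2 {α : Type*} (H : AmbGraph α) : Prop :=
  Nonempty (H.coe ≃g (⊤ : SimpleGraph (Fin 2)))

def IsK3 {α : Type*} (H : AmbGraph α) : Prop :=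
  Nonempty (H.coe ≃g (⊤ : SimpleGraph (Fin 3)))

def IsPrism {α : Type*} (H : AmbGraph α) : Prop :=
  Nonempty (H.coe ≃g PrismGraph)

/-- The class `G_sc` of Le and Pfender. -/
inductive Gsc {α : Type*} : AmbGraph α → Prop
  | k3 (H : AmbGraph α) : IsK3 H → Gsc H
  | prism (H : AmbGraph α) : IsPrism H → Gsc H
  | union (G H : AmbGraph α) : Gsc G → Gsc H →
      (IsK2 (G ⊓ H) ∨ IsK3 (G ⊓ H)) → Gsc (G ⊔ H)


/-! ### Auxiliary material -/

instance : DecidableRel CycleSix.Adj := fun a b =>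
  decidable_of_iff (a ≠ b ∧ (b = a + 1 ∨ a = b + 1)) (by rw [CycleSix, SimpleGraph.fromRel_adj])

instance : DecidableRel PrismGraph.Adj := fun a b =>
  decidable_of_iff (a ≠ b ∧ ¬ CycleSix.Adj a b) (by rw [PrismGraph, SimpleGraph.compl_adj])

lemma card_of_iso {α : Type*} {β : Type} [Fintype β] [DecidableEq β] (W : AmbGraph α)
    (B : SimpleGraph β) [DecidableRel B.Adj] (iso : W.coe ≃g B) :
    W.verts.Finite ∧ W.edgeSet.Finite ∧ W.verts.ncard = Fintype.card β ∧
      W.edgeSet.ncard = B.edgeFinset.card := by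
  have e1 : ↥W.verts ≃ β := iso.toEquiv
  have hfin : W.verts.Finite := Set.finite_coe_iff.mp (Finite.of_equiv β e1.symm)
  have e2 : ↥W.coe.edgeSet ≃ ↥W.edgeSet := by
    refine (Equiv.Set.image (Sym2.map (↑)) W.coe.edgeSet
      (Sym2.map.injective Subtype.val_injective)).trans (Equiv.setCongr ?_)
    exact W.image_coe_edgeSet_coe
  have e3 : ↥W.edgeSet ≃ ↥B.edgeSet := e2.symm.trans iso.mapEdgeSet
  refine ⟨hfin, Set.finite_coe_iff.mp (Finite.of_equiv _ e3.symm), ?_, ?_⟩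
  · rw [← Nat.card_coe_set_eq, Nat.card_congr e1]
    exact Nat.card_eq_fintype_card
  · rw [← Nat.card_coe_set_eq, Nat.card_congr e3]
    rw [Nat.card_eq_fintype_card]
    exact (Set.toFinset_card _).symm

lemma gsc_card {α : Type*} {H : AmbGraph α} (h : Gsc H) :
    H.verts.Finite ∧ H.edgeSet.Finite ∧
      (H.edgeSet.ncard : ℤ) = 2 * (H.verts.ncard : ℤ) - 3 := by
  induction h with
  | k3 W hW =>
    obtain ⟨iso⟩ := hW
    obtain ⟨h1, h2, h3, h4⟩ := card_of_iso W _ iso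
    refine ⟨h1, h2, ?_⟩
    rw [h3, h4, show (⊤ : SimpleGraph (Fin 3)).edgeFinset.card = 3 from by decide]
    norm_num
  | prism W hW =>
    obtain ⟨iso⟩ := hW
    obtain ⟨h1, h2, h3, h4⟩ := card_of_iso W _ iso
    refine ⟨h1, h2, ?_⟩
    rw [h3, h4, show PrismGraph.edgeFinset.card = 9 from by decide]
    norm_num
  | union A B _ _ hK ihA ihB =>
    obtain ⟨hA1, hA2, hA3⟩ := ihA
    obtain ⟨hB1, hB2, hB3⟩ := ihB
    have hIv : ((A ⊓ B).verts.ncard : ℤ) = 2 ∧ ((A ⊓ B).edgeSet.ncard : ℤ) = 1 ∨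
        ((A ⊓ B).verts.ncard : ℤ) = 3 ∧ ((A ⊓ B).edgeSet.ncard : ℤ) = 3 := by
      rcases hK with hk | hk
      · obtain ⟨iso⟩ := hk
        obtain ⟨_, _, h3, h4⟩ := card_of_iso _ _ iso
        left
        rw [h3, h4, show (⊤ : SimpleGraph (Fin 2)).edgeFinset.card = 1 from by decide]
        norm_num
      · obtain ⟨iso⟩ := hk
        obtain ⟨_, _, h3, h4⟩ := card_of_iso _ _ iso
        right
        rw [h3, h4, show (⊤ : SimpleGraph (Fin 3)).edgeFinset.card = 3 from by decide]
        norm_num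
    have hIinf : ((A ⊓ B).edgeSet.ncard : ℤ) = 2 * ((A ⊓ B).verts.ncard : ℤ) - 3 := by
      rcases hIv with ⟨h1, h2⟩ | ⟨h1, h2⟩ <;> rw [h1, h2] <;> ring
    have hvu : ((A ⊔ B).verts.ncard : ℤ) + ((A ⊓ B).verts.ncard : ℤ)
        = (A.verts.ncard : ℤ) + B.verts.ncard := by
      have h := Set.ncard_union_add_ncard_inter A.verts B.verts hA1 hB1
      rw [Subgraph.verts_sup, Subgraph.verts_inf]
      exact_mod_cast h
    have heu : ((A ⊔ B).edgeSet.ncard : ℤ) + ((A ⊓ B).edgeSet.ncard : ℤ)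
        = (A.edgeSet.ncard : ℤ) + B.edgeSet.ncard := by
      have h := Set.ncard_union_add_ncard_inter A.edgeSet B.edgeSet hA2 hB2
      rw [Subgraph.edgeSet_sup, Subgraph.edgeSet_inf]
      exact_mod_cast h
    refine ⟨?_, ?_, by linarith⟩
    · rw [Subgraph.verts_sup]; exact hA1.union hB1
    · rw [Subgraph.edgeSet_sup]; exact hA2.union hB2

lemma edgeSet_finite_of_verts_finite {α : Type*} (W : AmbGraph α) (h : W.verts.Finite) :
    W.edgeSet.Finite := by
  apply Set.Finite.subset ((h.prod h).image (fun p : α × α => s(p.1, p.2)))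
  intro e he
  induction e with
  | _ a b =>
    rw [Subgraph.mem_edgeSet] at he
    exact ⟨(a, b), ⟨W.edge_vert he, W.edge_vert he.symm⟩, rfl⟩

/-- Contraction of the non-edge `xy` in `G`: delete `y`, moving its edges to `x`. -/
def contractNE {α : Type*} (G : AmbGraph α) (x y : α) (hx : x ∈ G.verts) : AmbGraph α where
  verts := G.verts \ {y}
  Adj a b := (G.Adj a b ∧ a ≠ y ∧ b ≠ y) ∨ (a = x ∧ G.Adj y b ∧ b ≠ x ∧ x ≠ y) ∨
      (b = x ∧ G.Adj y a ∧ a ≠ x ∧ x ≠ y)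
  adj_sub := by
    rintro a b (⟨h, -, -⟩ | ⟨rfl, h, hbx, -⟩ | ⟨rfl, h, hax, -⟩)
    · exact G.adj_sub h
    · exact (SimpleGraph.top_adj _ _).mpr (Ne.symm hbx)
    · exact (SimpleGraph.top_adj _ _).mpr hax
  edge_vert := by
    rintro a b (⟨h, ha, -⟩ | ⟨rfl, h, hbx, hne⟩ | ⟨rfl, h, hax, hne⟩)
    · exact ⟨G.edge_vert h, ha⟩
    · exact ⟨hx, hne⟩
    · exact ⟨G.edge_vert h.symm, (G.adj_sub h).ne'⟩
  symm := by
    constructor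
    rintro a b (⟨h, ha, hb⟩ | ⟨rfl, h, hbx, hne⟩ | ⟨rfl, h, hax, hne⟩)
    · exact Or.inl ⟨h.symm, hb, ha⟩
    · exact Or.inr (Or.inr ⟨rfl, h, hbx, hne⟩)
    · exact Or.inr (Or.inl ⟨rfl, h, hax, hne⟩)

section Lift
variable {α : Type*} [DecidableEq α] (G : AmbGraph α) (x y : α) (hx : x ∈ G.verts)

lemma contract_adj_of_adj (hxy : x ≠ y) (hnadj : ¬ G.Adj x y) {a b : α} (h : G.Adj a b) :
    (contractNE G x y hx).Adj (if a = y then x else a) (if b = y then x else b) := by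
  have hne : a ≠ b := (G.adj_sub h).ne
  by_cases ha : a = y <;> by_cases hb : b = y
  · exact absurd (ha.trans hb.symm) hne
  · rw [if_pos ha, if_neg hb]
    refine Or.inr (Or.inl ⟨rfl, ha ▸ h, ?_, hxy⟩)
    rintro rfl
    exact hnadj (ha ▸ h.symm)
  · rw [if_neg ha, if_pos hb]
    refine Or.inr (Or.inr ⟨rfl, hb ▸ h.symm, ?_, hxy⟩)
    rintro rfl
    exact hnadj (hb ▸ h)
  · rw [if_neg ha, if_neg hb]
    exact Or.inl ⟨h, ha, hb⟩

lemma lift_cutset (hxy : x ≠ y) (hnadj : ¬ G.Adj x y)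
    (hcut : (contractNE G x y hx).coe.HasStableCutset) :
    G.coe.HasStableCutset := by
  set Hc := contractNE G x y hx with hHc
  obtain ⟨S, hSstab, hSdis⟩ := hcut
  have hρ : ∀ v : α, v ∈ G.verts → (if v = y then x else v) ∈ Hc.verts := by
    intro v hv
    by_cases h : v = y
    · rw [if_pos h]; exact ⟨hx, hxy⟩
    · rw [if_neg h]; exact ⟨hv, h⟩
  let ψ : ↥G.verts → ↥Hc.verts := fun v => ⟨if (v : α) = y then x else v, hρ v v.2⟩
  have hψadj : ∀ a b : ↥G.verts, G.coe.Adj a b → Hc.coe.Adj (ψ a) (ψ b) := by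
    intro a b h
    exact contract_adj_of_adj G x y hx hxy hnadj h
  refine ⟨ψ ⁻¹' S, ?_, ?_⟩
  · intro a ha b hb hadj
    exact hSstab (ψ a) ha (ψ b) hb (hψadj a b hadj)
  · intro hpre
    apply hSdis
    have hmem : ∀ u : ↥Hc.verts, (u : α) ∈ G.verts := fun u => u.2.1
    have hney : ∀ u : ↥Hc.verts, (u : α) ≠ y := fun u => u.2.2
    have hψid : ∀ u : ↥Hc.verts, ψ ⟨u, hmem u⟩ = u := by
      intro u; apply Subtype.ext; exact if_neg (hney u)
    have hlift : ∀ u : ↥Hc.verts, u ∉ S → (⟨(u : α), hmem u⟩ : ↥G.verts) ∈ (ψ ⁻¹' S)ᶜ :=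
      fun u hu hmemS => hu (hψid u ▸ hmemS)
    let f : (G.coe.induce (ψ ⁻¹' S)ᶜ) →g (Hc.coe.induce Sᶜ) := by
      refine ⟨fun v => ⟨ψ v, v.2⟩, ?_⟩
      intro a b hab
      exact hψadj a b hab
    intro u w
    have h2 := (hpre ⟨⟨(u : ↥Hc.verts), hmem u⟩, hlift u u.2⟩
      ⟨⟨(w : ↥Hc.verts), hmem w⟩, hlift w w.2⟩).map f
    have he1 : f ⟨⟨(u : ↥Hc.verts), hmem u⟩, hlift u u.2⟩ = u := by
      apply Subtype.ext; exact hψid u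
    have he2 : f ⟨⟨(w : ↥Hc.verts), hmem w⟩, hlift w w.2⟩ = w := by
      apply Subtype.ext; exact hψid w
    rwa [he1, he2] at h2
end Lift

section Count
variable {α : Type*} [DecidableEq α]

lemma contract_edge_bound (G : AmbGraph α) (x y z1 z2 z3 : α) (hx : x ∈ G.verts)
    (hfin : G.verts.Finite) (hxy : x ≠ y)
    (hxz1 : G.Adj x z1) (hyz1 : G.Adj y z1) (hxz2 : G.Adj x z2) (hyz2 : G.Adj y z2)
    (hxz3 : G.Adj x z3) (hyz3 : G.Adj y z3)
    (h12 : z1 ≠ z2) (h13 : z1 ≠ z3) (h23 : z2 ≠ z3) :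
    3 ≤ G.edgeSet.ncard ∧
      (contractNE G x y hx).edgeSet.ncard ≤ G.edgeSet.ncard - 3 := by
  classical
  set Hc := contractNE G x y hx with hHc
  have hGE : G.edgeSet.Finite := edgeSet_finite_of_verts_finite G hfin
  have hyN : ∀ e ∈ Hc.edgeSet, y ∉ e := by
    intro e he
    induction e with
    | _ a b =>
      rw [Subgraph.mem_edgeSet] at he
      have ha : a ≠ y := (Hc.edge_vert he).2
      have hb : b ≠ y := (Hc.edge_vert he.symm).2
      rw [Sym2.mem_iff]
      rintro (rfl | rfl)
      · exact ha rfl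
      · exact hb rfl
  have hform : ∀ e ∈ Hc.edgeSet, e ∉ G.edgeSet →
      ∃ b, e = s(x, b) ∧ G.Adj y b ∧ b ≠ x ∧ b ≠ y ∧ ¬ G.Adj x b := by
    intro e he hne
    induction e with
    | _ a b =>
      rw [Subgraph.mem_edgeSet] at he hne
      rcases he with ⟨h, -, -⟩ | ⟨rfl, hyb, hbx, -⟩ | ⟨rfl, hya, hax, -⟩
      · exact absurd h hne
      · exact ⟨b, rfl, hyb, hbx, (G.adj_sub hyb).ne', hne⟩
      · exact ⟨a, Sym2.eq_swap, hya, hax, (G.adj_sub hya).ne',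
          fun h' => hne h'.symm⟩
  set T : Set (Sym2 α) := {s(y, z1), s(y, z2), s(y, z3)} with hT
  have hz1y : z1 ≠ y := (G.adj_sub hyz1).ne'
  have hz2y : z2 ≠ y := (G.adj_sub hyz2).ne'
  have hz3y : z3 ≠ y := (G.adj_sub hyz3).ne'
  have hTsub : T ⊆ G.edgeSet := by
    rintro e (rfl | rfl | rfl)
    · exact Subgraph.mem_edgeSet.mpr hyz1
    · exact Subgraph.mem_edgeSet.mpr hyz2
    · exact Subgraph.mem_edgeSet.mpr hyz3
  have hTcard : T.ncard = 3 := by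
    refine Set.ncard_eq_three.mpr ⟨_, _, _, ?_, ?_, ?_, rfl⟩
    · exact fun h => h12 (Sym2.congr_right.mp h)
    · exact fun h => h13 (Sym2.congr_right.mp h)
    · exact fun h => h23 (Sym2.congr_right.mp h)
  let φ : Sym2 α → Sym2 α := fun e => if e ∈ G.edgeSet then e else Sym2.map (Equiv.swap x y) e
  have hφ1 : ∀ e ∈ G.edgeSet, φ e = e := fun e he => if_pos he
  have hφ2 : ∀ e, e ∉ G.edgeSet → φ e = Sym2.map (Equiv.swap x y) e := fun e he => if_neg he
  have hswap : ∀ b : α, b ≠ x → b ≠ y → Sym2.map (Equiv.swap x y) s(x, b) = s(y, b) := by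
    intro b hbx hby
    rw [Sym2.map_pair_eq, Equiv.swap_apply_left, Equiv.swap_apply_of_ne_of_ne hbx hby]
  have hyinT : ∀ e ∈ T, y ∈ e := by
    rintro e (rfl | rfl | rfl) <;> exact Sym2.mem_mk_left _ _
  have hmaps : ∀ e ∈ Hc.edgeSet, φ e ∈ G.edgeSet \ T := by
    intro e he
    by_cases hG : e ∈ G.edgeSet
    · rw [hφ1 e hG]
      exact ⟨hG, fun hmemT => hyN e he (hyinT e hmemT)⟩
    · obtain ⟨b, rfl, hyb, hbx, hby, hxb⟩ := hform _ he hG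
      rw [hφ2 _ hG, hswap b hbx hby]
      refine ⟨Subgraph.mem_edgeSet.mpr hyb, ?_⟩
      rintro (h | h | h)
      · exact hxb (Sym2.congr_right.mp h ▸ hxz1)
      · exact hxb (Sym2.congr_right.mp h ▸ hxz2)
      · exact hxb (Sym2.congr_right.mp h ▸ hxz3)
  have hinj : Set.InjOn φ Hc.edgeSet := by
    intro e1 he1 e2 he2 heq
    by_cases h1 : e1 ∈ G.edgeSet <;> by_cases h2 : e2 ∈ G.edgeSet
    · rwa [hφ1 _ h1, hφ1 _ h2] at heq
    · obtain ⟨b, rfl, hyb, hbx, hby, hxb⟩ := hform _ he2 h2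
      rw [hφ1 _ h1, hφ2 _ h2, hswap b hbx hby] at heq
      exact absurd (heq ▸ Sym2.mem_mk_left y b) (hyN e1 he1)
    · obtain ⟨b, rfl, hyb, hbx, hby, hxb⟩ := hform _ he1 h1
      rw [hφ2 _ h1, hφ1 _ h2, hswap b hbx hby] at heq
      exact absurd (heq ▸ Sym2.mem_mk_left y b) (hyN e2 he2)
    · obtain ⟨b1, rfl, hyb1, hb1x, hb1y, hxb1⟩ := hform _ he1 h1
      obtain ⟨b2, rfl, hyb2, hb2x, hb2y, hxb2⟩ := hform _ he2 h2
      rw [hφ2 _ h1, hφ2 _ h2, hswap b1 hb1x hb1y, hswap b2 hb2x hb2y] at heq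
      rw [Sym2.congr_right.mp heq]
  constructor
  · calc 3 = T.ncard := hTcard.symm
      _ ≤ G.edgeSet.ncard := Set.ncard_le_ncard hTsub hGE
  · calc Hc.edgeSet.ncard = (φ '' Hc.edgeSet).ncard := (Set.ncard_image_of_injOn hinj).symm
      _ ≤ (G.edgeSet \ T).ncard := by
          refine Set.ncard_le_ncard ?_ hGE.diff
          rintro _ ⟨e, he, rfl⟩
          exact hmaps e he
      _ = G.edgeSet.ncard - 3 := by
          rw [Set.ncard_diff hTsub ((Set.finite_singleton _).insert _ |>.insert _), hTcard]
end Count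

/-- In a minimum-order counterexample, non-adjacent vertices have at most two
common neighbors. -/
theorem min_cex_common_neighbors {α : Type*} (G : AmbGraph α)
    (hfin : G.verts.Finite)
    (hsize : (G.edgeSet.ncard : ℤ) ≤ 2 * (G.verts.ncard : ℤ) - 3)
    (hsc : ¬ G.coe.HasStableCutset) (hgsc : ¬ Gsc G)
    (hmin : ∀ H : AmbGraph α, H.verts.Finite → H.verts.ncard < G.verts.ncard →
      (H.edgeSet.ncard : ℤ) ≤ 2 * (H.verts.ncard : ℤ) - 3 →
      H.coe.HasStableCutset ∨ Gsc H) :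
    ∀ x y : α, x ∈ G.verts → y ∈ G.verts → x ≠ y → ¬ G.Adj x y →
      ({z : α | G.Adj x z ∧ G.Adj y z}).ncard ≤ 2 := by
  classical
  intro x y hxv hyv hxy hnadj
  by_contra hcon
  push_neg at hcon
  have hNsub : {z : α | G.Adj x z ∧ G.Adj y z} ⊆ G.verts :=
    fun z hz => G.edge_vert hz.1.symm
  have h3 : 3 ≤ ({z : α | G.Adj x z ∧ G.Adj y z}).ncard := hcon
  obtain ⟨T, hTN, hTcard⟩ := Set.exists_subset_card_eq h3
  obtain ⟨z1, z2, z3, h12, h13, h23, rfl⟩ := Set.ncard_eq_three.mp hTcard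
  have hz1 : G.Adj x z1 ∧ G.Adj y z1 := hTN (by simp)
  have hz2 : G.Adj x z2 ∧ G.Adj y z2 := hTN (by simp)
  have hz3 : G.Adj x z3 ∧ G.Adj y z3 := hTN (by simp)
  set Hc := contractNE G x y hxv with hHc
  have hHverts : Hc.verts = G.verts \ {y} := rfl
  have hHfin : Hc.verts.Finite := by rw [hHverts]; exact hfin.diff
  have hE := contract_edge_bound G x y z1 z2 z3 hxv hfin hxy
    hz1.1 hz1.2 hz2.1 hz2.2 hz3.1 hz3.2 h12 h13 h23
  have hnpos : 0 < G.verts.ncard := (Set.ncard_pos hfin).mpr ⟨y, hyv⟩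
  have hv : Hc.verts.ncard = G.verts.ncard - 1 := by
    rw [hHverts]
    exact Set.ncard_diff_singleton_of_mem hyv
  have hlt : Hc.verts.ncard < G.verts.ncard := by omega
  have hsize' : (Hc.edgeSet.ncard : ℤ) ≤ 2 * (Hc.verts.ncard : ℤ) - 3 := by
    obtain ⟨hE1, hE2⟩ := hE
    rw [← hHc] at hE2
    omega
  rcases hmin Hc hHfin hlt hsize' with hcut | hgs
  · exact hsc (lift_cutset G x y hxv hxy hnadj hcut)
  · obtain ⟨-, -, heq⟩ := gsc_card hgs
    obtain ⟨hE1, hE2⟩ := hE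
    rw [← hHc] at hE2
    omega
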